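/- Consider the binary univariate Gaussian mixture setup with q_{ia} > 0, σ_{ia} > 0, and posterior η(x,a) = q_{1a} φ_{1a}(x) / (q_{1a} φ_{1a}(x) + q_{0a} φ_{0a}(x)), and assume additionally that μ_{00} ≥ μ_{10} and μ_{01} ≥ μ_{11}. Then the following are equivalent. (i) For every threshold t ∈ (0,1) and every class i ∈ {0,1}: P_{X ~ N(μ_{i0}, σ_{i0}²)}(η(X,0) ≥ t) = P_{X ~ N(μ_{i1}, σ_{i1}²)}(η(X,1) ≥ t); that is, every group-aware threshold classifier 1{η(x,a) ≥ t} (and hence the minimizer of every cost-sensitive risk) satisfies exact equal opportunity and exact equalized odds. (ii) (μ_{01} − μ_{11})/σ_{11} = (μ_{00} − μ_{10})/σ_{10}, σ_{11}/σ_{01} = σ_{10}/σ_{00}, and q_{10}/q_{00} = q_{11}/q_{01}. -/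

import Mathlib

open MeasureTheory ProbabilityTheory

/-- Density of the univariate normal distribution `N(m, s²)`. -/
noncomputable def gaussPdf (m s x : ℝ) : ℝ :=
  (Real.sqrt (2 * Real.pi * s ^ 2))⁻¹ * Real.exp (-(x - m) ^ 2 / (2 * s ^ 2))

/-- The group-aware posterior `η(x, a) = q_{1a} φ_{1a}(x) / (q_{1a} φ_{1a}(x) + q_{0a} φ_{0a}(x))`. -/
noncomputable def posterior (q m s : Fin 2 → Fin 2 → ℝ) (x : ℝ) (a : Fin 2) : ℝ :=
  q 1 a * gaussPdf (m 1 a) (s 1 a) x /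
    (q 1 a * gaussPdf (m 1 a) (s 1 a) x + q 0 a * gaussPdf (m 0 a) (s 0 a) x)



open Real Set
open scoped NNReal ENNReal

namespace Statement2Aux

lemma intg_pow (n : ℕ) : Integrable fun z : ℝ => z ^ n * Real.exp (-z ^ 2 / 2) := by
  have h := integrable_rpow_mul_exp_neg_mul_sq (b := 1/2) (by norm_num) (s := (n : ℝ))
      (lt_of_lt_of_le neg_one_lt_zero (Nat.cast_nonneg n))
  simp only [Real.rpow_natCast] at h
  convert h using 2 with z
  ring_nf

noncomputable def J (n : ℕ) : ℝ := ∫ z : ℝ, z ^ n * Real.exp (-z ^ 2 / 2)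

lemma J_zero : J 0 = Real.sqrt (2 * Real.pi) := by
  have h := integral_gaussian (1/2)
  rw [J]
  simp only [pow_zero, one_mul]
  rw [show (2 : ℝ) * Real.pi = Real.pi / (1/2) by ring, ← h]
  congr 1 with z
  congr 1
  ring

lemma J_one : J 1 = 0 := by
  have hd : ∀ z : ℝ, HasDerivAt (fun z : ℝ => -Real.exp (-z ^ 2 / 2))
      (z ^ 1 * Real.exp (-z ^ 2 / 2)) z := by
    intro z
    have h1 : HasDerivAt (fun z : ℝ => -z ^ 2 / 2) (-z) z := by
      have := ((hasDerivAt_pow 2 z).neg).div_const 2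
      refine this.congr_deriv ?_
      simp; ring
    have := (h1.exp).neg
    refine this.congr_deriv ?_
    ring
  have := integral_eq_zero_of_hasDerivAt_of_integrable hd (intg_pow 1)
    (((intg_pow 0).congr ?_).neg)
  · rw [J]; exact this
  · filter_upwards with z; simp

lemma J_rec (n : ℕ) : J (n + 2) = (n + 1) * J n := by
  have hd : ∀ z : ℝ, HasDerivAt (fun z : ℝ => -(z ^ (n+1) * Real.exp (-z ^ 2 / 2)))
      (z ^ (n+2) * Real.exp (-z ^ 2 / 2) - (n+1) * (z ^ n * Real.exp (-z ^ 2 / 2))) z := by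
    intro z
    have h1 : HasDerivAt (fun z : ℝ => -z ^ 2 / 2) (-z) z := by
      have := ((hasDerivAt_pow 2 z).neg).div_const 2
      refine this.congr_deriv ?_
      simp; ring
    have h2 := (hasDerivAt_pow (n+1) z).mul h1.exp
    have := h2.neg
    refine this.congr_deriv ?_
    simp only [Nat.add_sub_cancel, Nat.cast_add, Nat.cast_one]
    ring
  have hint : Integrable fun z : ℝ =>
      z ^ (n+2) * Real.exp (-z ^ 2 / 2) - (n+1) * (z ^ n * Real.exp (-z ^ 2 / 2)) :=
    (intg_pow (n+2)).sub ((intg_pow n).const_mul _)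
  have := integral_eq_zero_of_hasDerivAt_of_integrable hd hint (((intg_pow (n+1)).neg))
  rw [integral_sub (intg_pow (n+2)) ((intg_pow n).const_mul _), MeasureTheory.integral_const_mul,
    sub_eq_zero] at this
  rw [J, J, this]

lemma J_two : J 2 = Real.sqrt (2 * Real.pi) := by have := J_rec 0; rw [J_zero] at this; simpa using this
lemma J_three : J 3 = 0 := by have := J_rec 1; rw [J_one] at this; simpa using this
lemma J_four : J 4 = 3 * Real.sqrt (2 * Real.pi) := by
  have := J_rec 2; rw [J_two] at this; rw [this]; norm_num
lemma J_five : J 5 = 0 := by have := J_rec 3; rw [J_three] at this; simpa using this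
lemma J_six : J 6 = 15 * Real.sqrt (2 * Real.pi) := by
  have := J_rec 4; rw [J_four] at this; rw [this]; ring_nf

lemma integral_poly_exp (c : Fin 7 → ℝ) :
    ∫ z : ℝ, (∑ i : Fin 7, c i * z ^ (i : ℕ)) * Real.exp (-z ^ 2 / 2)
      = (c 0 + c 2 + 3 * c 4 + 15 * c 6) * Real.sqrt (2 * Real.pi) := by
  have h1 : ∀ z : ℝ, (∑ i : Fin 7, c i * z ^ (i : ℕ)) * Real.exp (-z ^ 2 / 2)
      = ∑ i : Fin 7, c i * (z ^ (i : ℕ) * Real.exp (-z ^ 2 / 2)) := by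
    intro z; rw [Finset.sum_mul]; congr 1 with i; ring
  simp only [h1]
  rw [integral_finset_sum (μ := volume) Finset.univ
    (f := fun (i : Fin 7) (z : ℝ) => c i * (z ^ (i : ℕ) * Real.exp (-z ^ 2 / 2)))
    (fun i _ => (intg_pow (i : ℕ)).const_mul (c i))]
  simp only [MeasureTheory.integral_const_mul]
  show ∑ i : Fin 7, c i * J (i : ℕ) = _
  rw [Fin.sum_univ_seven]
  show c 0 * J 0 + c 1 * J 1 + c 2 * J 2 + c 3 * J 3 + c 4 * J 4 + c 5 * J 5 + c 6 * J 6 = _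
  rw [J_zero, J_one, J_two, J_three, J_four, J_five, J_six]
  ring

lemma pdf01 (z : ℝ) : gaussianPDFReal 0 1 z = (Real.sqrt (2 * Real.pi))⁻¹ * Real.exp (-z ^ 2 / 2) := by
  rw [gaussianPDFReal]
  norm_num

lemma integral_gaussReal01 (g : ℝ → ℝ) :
    ∫ z, g z ∂(gaussianReal 0 1) = ∫ z : ℝ, gaussianPDFReal 0 1 z * g z := by
  rw [gaussianReal_of_var_ne_zero 0 one_ne_zero]
  have : (gaussianPDF 0 1) = fun x => ((Real.toNNReal (gaussianPDFReal 0 1 x) : ℝ≥0) : ℝ≥0∞) := by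
    funext x; rfl
  rw [this, integral_withDensity_eq_integral_smul
    ((measurable_gaussianPDFReal 0 1).real_toNNReal)]
  congr 1 with x
  simp [NNReal.smul_def, Real.coe_toNNReal _ (gaussianPDFReal_nonneg 0 1 x)]

lemma sqrt2pi_pos : 0 < Real.sqrt (2 * Real.pi) := Real.sqrt_pos.2 (by positivity)

lemma integral_quad_pow (A B C : ℝ) (c : Fin 7 → ℝ) (k : ℕ)
    (hc : ∀ z : ℝ, (A * z ^ 2 + B * z + C) ^ k = ∑ i : Fin 7, c i * z ^ (i : ℕ)) :
    ∫ z, (A * z ^ 2 + B * z + C) ^ k ∂(gaussianReal 0 1)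
      = c 0 + c 2 + 3 * c 4 + 15 * c 6 := by
  rw [integral_gaussReal01]
  have hfun : (fun z : ℝ => gaussianPDFReal 0 1 z * (A * z ^ 2 + B * z + C) ^ k)
      = fun z : ℝ => (Real.sqrt (2 * Real.pi))⁻¹ *
        ((∑ i : Fin 7, c i * z ^ (i : ℕ)) * Real.exp (-z ^ 2 / 2)) := by
    funext z
    rw [pdf01, ← hc z]
    ring
  rw [hfun, MeasureTheory.integral_const_mul, integral_poly_exp]
  field_simp

lemma E1 (A B C : ℝ) :
    ∫ z, (A * z ^ 2 + B * z + C) ^ 1 ∂(gaussianReal 0 1) = A + C := by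
  rw [integral_quad_pow A B C ![C, B, A, 0, 0, 0, 0] 1 (fun z => by
    rw [Fin.sum_univ_seven]
    show _ = C * z ^ 0 + B * z ^ 1 + A * z ^ 2 + 0 * z ^ 3 + 0 * z ^ 4 + 0 * z ^ 5 + 0 * z ^ 6
    ring)]
  show C + A + 3 * (0 : ℝ) + 15 * 0 = A + C
  ring

lemma E2 (A B C : ℝ) :
    ∫ z, (A * z ^ 2 + B * z + C) ^ 2 ∂(gaussianReal 0 1)
      = 3 * A ^ 2 + B ^ 2 + C ^ 2 + 2 * A * C := by
  rw [integral_quad_pow A B C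
    ![C ^ 2, 2 * B * C, B ^ 2 + 2 * A * C, 2 * A * B, A ^ 2, 0, 0] 2 (fun z => by
    rw [Fin.sum_univ_seven]
    show _ = C ^ 2 * z ^ 0 + 2 * B * C * z ^ 1 + (B ^ 2 + 2 * A * C) * z ^ 2
      + 2 * A * B * z ^ 3 + A ^ 2 * z ^ 4 + 0 * z ^ 5 + 0 * z ^ 6
    ring)]
  show C ^ 2 + (B ^ 2 + 2 * A * C) + 3 * A ^ 2 + 15 * (0 : ℝ) = _
  ring

lemma E3 (A B C : ℝ) :
    ∫ z, (A * z ^ 2 + B * z + C) ^ 3 ∂(gaussianReal 0 1)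
      = 15 * A ^ 3 + C ^ 3 + 9 * A ^ 2 * C + 9 * A * B ^ 2 + 3 * B ^ 2 * C + 3 * A * C ^ 2 := by
  rw [integral_quad_pow A B C ![C ^ 3, 3 * B * C ^ 2, 3 * A * C ^ 2 + 3 * B ^ 2 * C,
      B ^ 3 + 6 * A * B * C, 3 * A ^ 2 * C + 3 * A * B ^ 2, 3 * A ^ 2 * B, A ^ 3] 3 (fun z => by
    rw [Fin.sum_univ_seven]
    show _ = C ^ 3 * z ^ 0 + 3 * B * C ^ 2 * z ^ 1 + (3 * A * C ^ 2 + 3 * B ^ 2 * C) * z ^ 2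
      + (B ^ 3 + 6 * A * B * C) * z ^ 3 + (3 * A ^ 2 * C + 3 * A * B ^ 2) * z ^ 4
      + 3 * A ^ 2 * B * z ^ 5 + A ^ 3 * z ^ 6
    ring)]
  show C ^ 3 + (3 * A * C ^ 2 + 3 * B ^ 2 * C) + 3 * (3 * A ^ 2 * C + 3 * A * B ^ 2)
      + 15 * A ^ 3 = _
  ring

lemma coeffs_eq {A0 B0 C0 A1 B1 C1 : ℝ} (hB0 : 0 ≤ B0) (hB1 : 0 ≤ B1)
    (h1 : A0 + C0 = A1 + C1)
    (h2 : 3*A0^2+B0^2+C0^2+2*A0*C0 = 3*A1^2+B1^2+C1^2+2*A1*C1)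
    (h3 : 15*A0^3 + C0^3 + 9*A0^2*C0 + 9*A0*B0^2 + 3*B0^2*C0 + 3*A0*C0^2
        = 15*A1^3 + C1^3 + 9*A1^2*C1 + 9*A1*B1^2 + 3*B1^2*C1 + 3*A1*C1^2) :
    A0 = A1 ∧ B0 = B1 ∧ C0 = C1 := by
  have hv : 2*A0^2+B0^2 = 2*A1^2+B1^2 := by
    linear_combination h2 - (A0 + C0 + A1 + C1) * h1
  have ht : 8*A0^3+6*A0*B0^2 = 8*A1^3+6*A1*B1^2 := by
    linear_combination h3 - 3*(A0+C0)*h2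
      - (3*(3*A1^2+B1^2+C1^2+2*A1*C1) - 2*((A0+C0)^2 + (A0+C0)*(A1+C1) + (A1+C1)^2))*h1
  have hB1sq : B1^2 = 2*A0^2 + B0^2 - 2*A1^2 := by linarith
  have h4 : (A0 - A1) * (6*(2*A0^2+B0^2) - 4*(A0^2+A0*A1+A1^2)) = 0 := by
    linear_combination ht + 6*A1*hB1sq
  have hA : A0 = A1 := by
    rcases mul_eq_zero.1 h4 with h | h
    · linarith
    · have hsq : (A0 - A1)^2 ≤ 0 := by nlinarith [sq_nonneg B0, sq_nonneg B1]
      have := le_antisymm hsq (sq_nonneg _)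
      have := pow_eq_zero_iff (n := 2) (by norm_num) |>.1 this
      linarith
  have hB : B0 = B1 := by
    have h5 : (B0 - B1) * (B0 + B1) = 0 := by linear_combination hv - 2*(A0+A1)*hA
    rcases mul_eq_zero.1 h5 with h | h
    · linarith
    · linarith
  exact ⟨hA, hB, by linarith⟩

lemma gaussPdf_pos (m : ℝ) {s : ℝ} (hs : 0 < s) (x : ℝ) : 0 < gaussPdf m s x :=
  mul_pos (inv_pos.2 (Real.sqrt_pos.2 (by positivity))) (Real.exp_pos _)

lemma log_gaussPdf (m : ℝ) {s : ℝ} (hs : 0 < s) (x : ℝ) :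
    Real.log (gaussPdf m s x)
      = -(Real.log (2 * Real.pi) / 2) - Real.log s - (x - m) ^ 2 / (2 * s ^ 2) := by
  rw [gaussPdf, Real.log_mul (by positivity) (Real.exp_ne_zero _), Real.log_inv, Real.log_exp,
    Real.log_sqrt (by positivity), Real.log_mul (by positivity) (by positivity),
    Real.log_pow]
  push_cast
  ring

lemma log_ratio (q0 q1 m0 m1 s0 s1 : ℝ) (hq0 : 0 < q0) (hq1 : 0 < q1)
    (hs0 : 0 < s0) (hs1 : 0 < s1) (z : ℝ) :
    Real.log (q0 * gaussPdf m0 s0 (m1 + s1 * z)) - Real.log (q1 * gaussPdf m1 s1 (m1 + s1 * z))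
      = (1/2 - s1^2/(2*s0^2)) * z^2 + (s1*(m0-m1)/s0^2) * z
        + (Real.log q0 - Real.log q1 + Real.log s1 - Real.log s0 - (m0-m1)^2/(2*s0^2)) := by
  rw [Real.log_mul (ne_of_gt hq0) (ne_of_gt (gaussPdf_pos m0 hs0 _)),
    Real.log_mul (ne_of_gt hq1) (ne_of_gt (gaussPdf_pos m1 hs1 _)),
    log_gaussPdf m0 hs0, log_gaussPdf m1 hs1]
  have h0 : s0 ≠ 0 := ne_of_gt hs0
  have h1 : s1 ≠ 0 := ne_of_gt hs1
  field_simp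
  ring

lemma post_ge_iff {q0 q1 m0 m1 s0 s1 t : ℝ} (hq0 : 0 < q0) (hq1 : 0 < q1)
    (hs0 : 0 < s0) (hs1 : 0 < s1) (ht : t ∈ Set.Ioo (0:ℝ) 1) (x : ℝ) :
    (t ≤ q1 * gaussPdf m1 s1 x / (q1 * gaussPdf m1 s1 x + q0 * gaussPdf m0 s0 x)) ↔
      Real.log (q0 * gaussPdf m0 s0 x) - Real.log (q1 * gaussPdf m1 s1 x)
        ≤ Real.log ((1 - t) / t) := by
  obtain ⟨ht0, ht1⟩ := ht
  set N := q1 * gaussPdf m1 s1 x with hN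
  set D := q0 * gaussPdf m0 s0 x with hD
  have hNpos : 0 < N := mul_pos hq1 (gaussPdf_pos m1 hs1 x)
  have hDpos : 0 < D := mul_pos hq0 (gaussPdf_pos m0 hs0 x)
  rw [le_div_iff₀ (by linarith)]
  rw [show Real.log D - Real.log N = Real.log (D / N) from (Real.log_div hDpos.ne' hNpos.ne').symm]
  rw [Real.log_le_log_iff (by positivity) (div_pos (by linarith) ht0)]
  rw [div_le_div_iff₀ hNpos (by linarith)]
  constructor <;> intro h <;> nlinarith

lemma gauss_affine (μ σ c d : ℝ) :
    (gaussianReal μ ((σ^2).toNNReal)).map (fun x => c * x + d)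
      = gaussianReal (c * μ + d) (((c * σ)^2).toNNReal) := by
  have hfun : (fun x : ℝ => c * x + d) = ((· + d) ∘ (c * ·)) := rfl
  rw [hfun, ← Measure.map_map (measurable_add_const d) (measurable_const_mul c),
    gaussianReal_map_const_mul, gaussianReal_map_add_const]
  congr 1
  apply NNReal.coe_injective
  push_cast
  rw [Real.coe_toNNReal _ (sq_nonneg σ), Real.coe_toNNReal _ (sq_nonneg (c*σ))]
  ring

lemma gauss_apply_std (μ : ℝ) {σ : ℝ} (hσ : 0 < σ) {S : Set ℝ} (hS : MeasurableSet S) :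
    gaussianReal μ ((σ^2).toNNReal) S = gaussianReal 0 1 ((fun z => μ + σ * z) ⁻¹' S) := by
  have h := gauss_affine 0 1 σ μ
  simp only [mul_zero, zero_add, mul_one] at h
  have h1 : ((1:ℝ)^2).toNNReal = 1 := by simp
  rw [h1] at h
  rw [← h, Measure.map_apply (by fun_prop) hS]
  congr 1
  ext z
  simp [add_comm]

lemma measure_eq_of_quad {A0 B0 C0 A1 B1 C1 : ℝ} (hB0 : 0 ≤ B0) (hB1 : 0 ≤ B1)
    (h : ∀ u : ℝ, gaussianReal 0 1 {z | A0*z^2+B0*z+C0 ≤ u}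
                = gaussianReal 0 1 {z | A1*z^2+B1*z+C1 ≤ u}) :
    A0 = A1 ∧ B0 = B1 ∧ C0 = C1 := by
  have hG0 : Measurable fun z : ℝ => A0*z^2+B0*z+C0 := by fun_prop
  have hG1 : Measurable fun z : ℝ => A1*z^2+B1*z+C1 := by fun_prop
  have hmap : (gaussianReal 0 1).map (fun z => A0*z^2+B0*z+C0)
      = (gaussianReal 0 1).map (fun z => A1*z^2+B1*z+C1) := by
    haveI : IsProbabilityMeasure ((gaussianReal 0 1).map (fun z => A0*z^2+B0*z+C0)) :=
      Measure.isProbabilityMeasure_map hG0.aemeasurable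
    refine Measure.ext_of_Iic _ _ (fun u => ?_)
    rw [Measure.map_apply hG0 measurableSet_Iic, Measure.map_apply hG1 measurableSet_Iic]
    exact h u
  have hint : ∀ k : ℕ, ∫ z, (A0*z^2+B0*z+C0)^k ∂(gaussianReal 0 1)
      = ∫ z, (A1*z^2+B1*z+C1)^k ∂(gaussianReal 0 1) := by
    intro k
    have e0 := integral_map (φ := fun z : ℝ => A0*z^2+B0*z+C0) (μ := gaussianReal 0 1)
      hG0.aemeasurable ((measurable_id.pow_const k).aestronglyMeasurable (β := ℝ))
    have e1 := integral_map (φ := fun z : ℝ => A1*z^2+B1*z+C1) (μ := gaussianReal 0 1)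
      hG1.aemeasurable ((measurable_id.pow_const k).aestronglyMeasurable (β := ℝ))
    simp only [id_eq] at e0 e1
    rw [← e0, ← e1, hmap]
  have m1 := hint 1
  have m2 := hint 2
  have m3 := hint 3
  rw [E1, E1] at m1
  rw [E2, E2] at m2
  rw [E3, E3] at m3
  exact coeffs_eq hB0 hB1 m1 m2 m3

lemma gauss_post_set {q0 q1 m0 m1 s0 s1 t : ℝ} (hq0 : 0 < q0) (hq1 : 0 < q1)
    (hs0 : 0 < s0) (hs1 : 0 < s1) (ht : t ∈ Set.Ioo (0:ℝ) 1) :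
    gaussianReal m1 ((s1^2).toNNReal)
        {x | q1 * gaussPdf m1 s1 x / (q1 * gaussPdf m1 s1 x + q0 * gaussPdf m0 s0 x) ≥ t}
      = gaussianReal 0 1 {z | (1/2 - s1^2/(2*s0^2)) * z^2 + (s1*(m0-m1)/s0^2) * z
          + (Real.log q0 - Real.log q1 + Real.log s1 - Real.log s0 - (m0-m1)^2/(2*s0^2))
          ≤ Real.log ((1 - t) / t)} := by
  have hpostm : Measurable fun x : ℝ =>
      q1 * gaussPdf m1 s1 x / (q1 * gaussPdf m1 s1 x + q0 * gaussPdf m0 s0 x) := by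
    unfold gaussPdf; fun_prop
  have hS : MeasurableSet {x : ℝ |
      q1 * gaussPdf m1 s1 x / (q1 * gaussPdf m1 s1 x + q0 * gaussPdf m0 s0 x) ≥ t} :=
    measurableSet_le measurable_const hpostm
  rw [gauss_apply_std m1 hs1 hS]
  congr 1
  ext z
  simp only [Set.mem_preimage, Set.mem_setOf_eq, ge_iff_le]
  rw [post_ge_iff hq0 hq1 hs0 hs1 ht, log_ratio q0 q1 m0 m1 s0 s1 hq0 hq1 hs0 hs1 z]

set_option maxHeartbeats 1000000 in
theorem statement2_fwd (q m s : Fin 2 → Fin 2 → ℝ)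
    (hq : ∀ i a, 0 < q i a) (hqsum : ∑ i, ∑ a, q i a = 1)
    (hs : ∀ i a, 0 < s i a)
    (hm0 : m 0 0 ≥ m 1 0) (hm1 : m 0 1 ≥ m 1 1)
    (H : ∀ t ∈ Set.Ioo (0 : ℝ) 1, ∀ i : Fin 2,
        gaussianReal (m i 0) ((s i 0 ^ 2).toNNReal) {x | posterior q m s x 0 ≥ t} =
        gaussianReal (m i 1) ((s i 1 ^ 2).toNNReal) {x | posterior q m s x 1 ≥ t}) :
    ((m 0 1 - m 1 1) / s 1 1 = (m 0 0 - m 1 0) / s 1 0 ∧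
        s 1 1 / s 0 1 = s 1 0 / s 0 0 ∧
        q 1 0 / q 0 0 = q 1 1 / q 0 1) := by
  have key : ∀ u : ℝ,
      gaussianReal 0 1 {z | (1/2 - (s 1 0)^2/(2*(s 0 0)^2)) * z^2
          + ((s 1 0)*(m 0 0 - m 1 0)/(s 0 0)^2) * z
          + (Real.log (q 0 0) - Real.log (q 1 0) + Real.log (s 1 0) - Real.log (s 0 0)
            - (m 0 0 - m 1 0)^2/(2*(s 0 0)^2)) ≤ u}
      = gaussianReal 0 1 {z | (1/2 - (s 1 1)^2/(2*(s 0 1)^2)) * z^2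
          + ((s 1 1)*(m 0 1 - m 1 1)/(s 0 1)^2) * z
          + (Real.log (q 0 1) - Real.log (q 1 1) + Real.log (s 1 1) - Real.log (s 0 1)
            - (m 0 1 - m 1 1)^2/(2*(s 0 1)^2)) ≤ u} := by
    intro u
    set t : ℝ := (1 + Real.exp u)⁻¹ with htdef
    have hexp : (0:ℝ) < Real.exp u := Real.exp_pos u
    have ht : t ∈ Set.Ioo (0:ℝ) 1 := by
      constructor
      · positivity
      · rw [htdef]
        rw [inv_lt_one_iff₀]
        right; linarith
    have hu : Real.log ((1 - t)/t) = u := by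
      have h1 : (1:ℝ) + Real.exp u ≠ 0 := by positivity
      have h2 : (1 - t)/t = Real.exp u := by
        rw [htdef]
        field_simp
        ring
      rw [h2, Real.log_exp]
    have h := H t ht 1
    unfold _root_.posterior at h
    rw [gauss_post_set (hq 0 0) (hq 1 0) (hs 0 0) (hs 1 0) ht,
        gauss_post_set (hq 0 1) (hq 1 1) (hs 0 1) (hs 1 1) ht, hu] at h
    exact h
  obtain ⟨hA, hB, hC⟩ := measure_eq_of_quad
    (div_nonneg (mul_nonneg (hs 1 0).le (sub_nonneg.2 hm0)) (sq_nonneg _))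
    (div_nonneg (mul_nonneg (hs 1 1).le (sub_nonneg.2 hm1)) (sq_nonneg _)) key
  -- now algebraic conversions
  have hs00 := hs 0 0; have hs10 := hs 1 0; have hs01 := hs 0 1; have hs11 := hs 1 1
  have hq00 := hq 0 0; have hq10 := hq 1 0; have hq01 := hq 0 1; have hq11 := hq 1 1
  -- from hA : squared ratio equality
  have hsq : (s 1 0)^2 * (s 0 1)^2 = (s 1 1)^2 * (s 0 0)^2 := by
    have h' : (s 1 0)^2/(2*(s 0 0)^2) = (s 1 1)^2/(2*(s 0 1)^2) := by linarith
    rw [div_eq_div_iff (by positivity) (by positivity)] at h'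
    linarith
  have hab : s 1 1 * s 0 0 = s 1 0 * s 0 1 := by
    have h5 : (s 1 1 * s 0 0 - s 1 0 * s 0 1) * (s 1 1 * s 0 0 + s 1 0 * s 0 1) = 0 := by
      linear_combination -hsq
    rcases mul_eq_zero.1 h5 with h | h
    · linarith
    · nlinarith [mul_pos hs11 hs00, mul_pos hs10 hs01]
  have goal2 : s 1 1 / s 0 1 = s 1 0 / s 0 0 := by
    rw [div_eq_div_iff (ne_of_gt hs01) (ne_of_gt hs00)]
    linarith
  -- from hB : mean condition
  have hB' : s 1 0 * (m 0 0 - m 1 0) * (s 0 1)^2 = s 1 1 * (m 0 1 - m 1 1) * (s 0 0)^2 := by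
    rw [div_eq_div_iff (by positivity) (by positivity)] at hB
    linarith
  have hd : (m 0 1 - m 1 1) * s 1 0 = (m 0 0 - m 1 0) * s 1 1 := by
    have hM : (m 0 1 - m 1 1) * s 1 0 * (s 1 0 * (s 0 1)^2)
        = (m 0 0 - m 1 0) * s 1 1 * (s 1 0 * (s 0 1)^2) := by
      have hab2 : (s 0 1)^2 * (s 1 0)^2 = (s 1 1)^2 * (s 0 0)^2 := by linear_combination hsq
      linear_combination (m 0 1 - m 1 1) * hab2 - s 1 1 * hB'
    exact mul_right_cancel₀ (by positivity) hM
  have goal1 : (m 0 1 - m 1 1) / s 1 1 = (m 0 0 - m 1 0) / s 1 0 := by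
    rw [div_eq_div_iff (ne_of_gt hs11) (ne_of_gt hs10)]
    linarith
  -- from hC : probability ratios
  have hlog_s : Real.log (s 1 1) - Real.log (s 0 1) = Real.log (s 1 0) - Real.log (s 0 0) := by
    have := congrArg Real.log goal2
    rw [Real.log_div (ne_of_gt hs11) (ne_of_gt hs01),
       Real.log_div (ne_of_gt hs10) (ne_of_gt hs00)] at this
    linarith
  have hδ : (m 0 1 - m 1 1)^2/(2*(s 0 1)^2) = (m 0 0 - m 1 0)^2/(2*(s 0 0)^2) := by
    rw [div_eq_div_iff (by positivity) (by positivity)]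
    have hx : (m 0 1 - m 1 1)^2*(2*(s 0 0)^2)*((s 1 0)^2)
        = (m 0 0 - m 1 0)^2*(2*(s 0 1)^2)*((s 1 0)^2) := by
      have hab2 : (s 0 1)^2 * (s 1 0)^2 = (s 1 1)^2 * (s 0 0)^2 := by linear_combination hsq
      linear_combination 2*(s 0 0)^2*((m 0 1 - m 1 1)*(s 1 0) + (m 0 0 - m 1 0)*(s 1 1))*hd
        - 2*(m 0 0 - m 1 0)^2*hab2
    exact mul_right_cancel₀ (by positivity) hx
  have hlogq : Real.log (q 0 0) - Real.log (q 1 0) = Real.log (q 0 1) - Real.log (q 1 1) := by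
    rw [hδ] at hC
    linarith [hlog_s]
  have hqr : q 0 0 / q 1 0 = q 0 1 / q 1 1 := by
    have h6 : Real.log (q 0 0 / q 1 0) = Real.log (q 0 1 / q 1 1) := by
      rw [Real.log_div (ne_of_gt hq00) (ne_of_gt hq10),
        Real.log_div (ne_of_gt hq01) (ne_of_gt hq11)]
      linarith
    have := congrArg Real.exp h6
    rwa [Real.exp_log (by positivity), Real.exp_log (by positivity)] at this
  have goal3 : q 1 0 / q 0 0 = q 1 1 / q 0 1 := by
    rw [div_eq_div_iff (ne_of_gt hq10) (ne_of_gt hq11)] at hqr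
    rw [div_eq_div_iff (ne_of_gt hq00) (ne_of_gt hq01)]
    linarith
  exact ⟨goal1, goal2, goal3⟩

lemma gaussPdf_affine {m1 s1 m0 s0 c d : ℝ} (hc : 0 < c) (hs1 : 0 < s1)
    (hcs : c * s1 = s0) (hcm : c * m1 + d = m0) (x : ℝ) :
    gaussPdf m0 s0 (c * x + d) = c⁻¹ * gaussPdf m1 s1 x := by
  unfold gaussPdf
  have h1 : c * x + d - m0 = c * (x - m1) := by rw [← hcm]; ring
  have h2 : 2 * Real.pi * s0 ^ 2 = c^2 * (2 * Real.pi * s1 ^ 2) := by rw [← hcs]; ring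
  rw [h1, h2, Real.sqrt_mul (sq_nonneg c), Real.sqrt_sq hc.le]
  have h3 : -(c * (x - m1)) ^ 2 / (2 * s0 ^ 2) = -(x - m1) ^ 2 / (2 * s1 ^ 2) := by
    rw [← hcs]
    have h4 : s1 ≠ 0 := ne_of_gt hs1
    have h5 : c ≠ 0 := ne_of_gt hc
    field_simp
  rw [h3, mul_inv]
  ring

theorem statement2_bwd (q m s : Fin 2 → Fin 2 → ℝ)
    (hq : ∀ i a, 0 < q i a) (hs : ∀ i a, 0 < s i a)
    (h1 : (m 0 1 - m 1 1) / s 1 1 = (m 0 0 - m 1 0) / s 1 0)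
    (h2 : s 1 1 / s 0 1 = s 1 0 / s 0 0)
    (h3 : q 1 0 / q 0 0 = q 1 1 / q 0 1) :
    ∀ t ∈ Set.Ioo (0 : ℝ) 1, ∀ i : Fin 2,
        gaussianReal (m i 0) ((s i 0 ^ 2).toNNReal) {x | posterior q m s x 0 ≥ t} =
        gaussianReal (m i 1) ((s i 1 ^ 2).toNNReal) {x | posterior q m s x 1 ≥ t} := by
  intro t ht i
  set c : ℝ := s 1 0 / s 1 1 with hcdef
  set d : ℝ := m 1 0 - c * m 1 1 with hddef
  have hc : 0 < c := div_pos (hs 1 0) (hs 1 1)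
  have hs2 : s 1 1 * s 0 0 = s 1 0 * s 0 1 := by
    rw [div_eq_div_iff (ne_of_gt (hs 0 1)) (ne_of_gt (hs 0 0))] at h2
    linarith
  have hm2 : (m 0 1 - m 1 1) * s 1 0 = (m 0 0 - m 1 0) * s 1 1 := by
    rw [div_eq_div_iff (ne_of_gt (hs 1 1)) (ne_of_gt (hs 1 0))] at h1
    linarith
  have hcs : ∀ j : Fin 2, c * s j 1 = s j 0 := by
    intro j
    fin_cases j
    · show c * s 0 1 = s 0 0
      rw [hcdef, div_mul_eq_mul_div, div_eq_iff (ne_of_gt (hs 1 1))]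
      linarith
    · show c * s 1 1 = s 1 0
      rw [hcdef, div_mul_eq_mul_div, div_eq_iff (ne_of_gt (hs 1 1))]
  have hcm : ∀ j : Fin 2, c * m j 1 + d = m j 0 := by
    intro j
    fin_cases j
    · show c * m 0 1 + d = m 0 0
      have key : c * (m 0 1 - m 1 1) = m 0 0 - m 1 0 := by
        rw [hcdef, div_mul_eq_mul_div, div_eq_iff (ne_of_gt (hs 1 1))]
        linear_combination hm2
      rw [hddef]
      linear_combination key
    · show c * m 1 1 + d = m 1 0
      rw [hddef]; ring
  have hq3 : q 1 0 * q 0 1 = q 1 1 * q 0 0 := by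
    rw [div_eq_div_iff (ne_of_gt (hq 0 0)) (ne_of_gt (hq 0 1))] at h3
    linarith
  have hpost : ∀ x, posterior q m s (c * x + d) 0 = posterior q m s x 1 := by
    intro x
    unfold _root_.posterior
    rw [gaussPdf_affine hc (hs 1 1) (hcs 1) (hcm 1), gaussPdf_affine hc (hs 0 1) (hcs 0) (hcm 0)]
    have p11 := gaussPdf_pos (m 1 1) (hs 1 1) x
    have p01 := gaussPdf_pos (m 0 1) (hs 0 1) x
    have hcne : c ≠ 0 := ne_of_gt hc
    have dpL : 0 < q 1 0 * (c⁻¹ * gaussPdf (m 1 1) (s 1 1) x)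
        + q 0 0 * (c⁻¹ * gaussPdf (m 0 1) (s 0 1) x) :=
      add_pos (mul_pos (hq 1 0) (mul_pos (inv_pos.2 hc) p11))
        (mul_pos (hq 0 0) (mul_pos (inv_pos.2 hc) p01))
    have dpR : 0 < q 1 1 * gaussPdf (m 1 1) (s 1 1) x + q 0 1 * gaussPdf (m 0 1) (s 0 1) x :=
      add_pos (mul_pos (hq 1 1) p11) (mul_pos (hq 0 1) p01)
    rw [div_eq_div_iff (ne_of_gt dpL) (ne_of_gt dpR)]
    linear_combination (c⁻¹ * gaussPdf (m 1 1) (s 1 1) x * gaussPdf (m 0 1) (s 0 1) x) * hq3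
  have hpostm : Measurable fun x : ℝ => posterior q m s x 0 := by
    unfold _root_.posterior gaussPdf; fun_prop
  have hS : MeasurableSet {x : ℝ | posterior q m s x 0 ≥ t} :=
    measurableSet_le measurable_const hpostm
  have hset : {x | posterior q m s x 1 ≥ t} = (fun x => c * x + d) ⁻¹' {y | posterior q m s y 0 ≥ t} := by
    ext x
    simp only [Set.mem_preimage, Set.mem_setOf_eq, hpost x]
  rw [hset, ← Measure.map_apply (by fun_prop) hS, gauss_affine, hcm i, hcs i]

end Statement2Aux

/-- in the binary univariate Gaussian mixture setup (with
`μ_{00} ≥ μ_{10}` and `μ_{01} ≥ μ_{11}`), every group-aware threshold classifier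
`1{η(x,a) ≥ t}`, `t ∈ (0,1)`, has equal class-conditional acceptance rates in both
groups for both classes (exact equal opportunity and equalized odds) **iff** the
parametric ideality conditions
`(μ_{01} − μ_{11})/σ_{11} = (μ_{00} − μ_{10})/σ_{10}`, `σ_{11}/σ_{01} = σ_{10}/σ_{00}`,
`q_{10}/q_{00} = q_{11}/q_{01}` hold. -/
theorem statement2 (q m s : Fin 2 → Fin 2 → ℝ)
    (hq : ∀ i a, 0 < q i a) (hqsum : ∑ i, ∑ a, q i a = 1)
    (hs : ∀ i a, 0 < s i a)
    (hm0 : m 0 0 ≥ m 1 0) (hm1 : m 0 1 ≥ m 1 1) :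
    (∀ t ∈ Set.Ioo (0 : ℝ) 1, ∀ i : Fin 2,
        gaussianReal (m i 0) ((s i 0 ^ 2).toNNReal) {x | posterior q m s x 0 ≥ t} =
        gaussianReal (m i 1) ((s i 1 ^ 2).toNNReal) {x | posterior q m s x 1 ≥ t}) ↔
      ((m 0 1 - m 1 1) / s 1 1 = (m 0 0 - m 1 0) / s 1 0 ∧
        s 1 1 / s 0 1 = s 1 0 / s 0 0 ∧
        q 1 0 / q 0 0 = q 1 1 / q 0 1) := by
  constructor
  · intro H
    exact Statement2Aux.statement2_fwd q m s hq hqsum hs hm0 hm1 H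
  · rintro ⟨h1, h2, h3⟩
    exact Statement2Aux.statement2_bwd q m s hq hs h1 h2 h3
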